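/- For θ > 0, μ ∈ ℝ, and Z ~ N(0,1): E[(η_θ(μ + Z) − μ)²] is a nondecreasing function of |μ|, and for every μ, E[(η_θ(μ+Z) − μ)²] ≤ 1 + θ², with equality in the limit |μ| → ∞. -/

import Mathlib

open MeasureTheory Filter

noncomputable def stdφ (t : ℝ) : ℝ := Real.exp (-t^2/2) / Real.sqrt (2*Real.pi)

namespace SoftThresholdAux

/-- clamp of `t` to `[-θ, θ]`. -/
noncomputable def cl (θ t : ℝ) : ℝ := max (min t θ) (-θ)

lemma sign_mul_max_eq {θ : ℝ} (hθ : 0 ≤ θ) (x : ℝ) :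
    Real.sign x * max (|x| - θ) 0 = x - cl θ x := by
  unfold cl
  rcases lt_trichotomy x 0 with h | h | h
  · rw [Real.sign_of_neg h, abs_of_neg h]
    rcases le_or_gt x (-θ) with h2 | h2
    · rw [max_eq_left (by linarith), min_eq_left (by linarith), max_eq_right h2]; ring
    · rw [max_eq_right (by linarith), min_eq_left (by linarith), max_eq_left h2.le]; ring
  · subst h; simp [min_eq_left hθ, max_eq_left (by linarith : -θ ≤ (0:ℝ))]
  · rw [Real.sign_of_pos h, abs_of_pos h]
    rcases le_or_gt θ x with h2 | h2
    · rw [max_eq_left (by linarith), min_eq_right h2, max_eq_left (by linarith)]; ring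
    · rw [max_eq_right (by linarith), min_eq_left h2.le, max_eq_left (by linarith)]; ring

lemma abs_cl_le {θ : ℝ} (hθ : 0 ≤ θ) (t : ℝ) : |cl θ t| ≤ θ := by
  unfold cl
  rw [abs_le]
  constructor
  · exact le_max_right _ _
  · exact max_le (min_le_right _ _) (by linarith)

lemma cl_lip (θ a b : ℝ) : |cl θ a - cl θ b| ≤ |a - b| := by
  unfold cl
  calc |max (min a θ) (-θ) - max (min b θ) (-θ)| ≤ |min a θ - min b θ| :=
        abs_max_sub_max_le_abs _ _ _
    _ ≤ |a - b| := by
        have := abs_min_sub_min_le_max a θ b θ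
        simpa using this

lemma cl_eq_self {θ t : ℝ} (h : |t| ≤ θ) : cl θ t = t := by
  rw [abs_le] at h
  unfold cl
  rw [min_eq_left h.2, max_eq_left h.1]

lemma cl_eq_of_ge {θ t : ℝ} (hθ : 0 ≤ θ) (h : θ ≤ t) : cl θ t = θ := by
  unfold cl
  rw [min_eq_right h, max_eq_left (by linarith)]

lemma cl_eq_of_le {θ t : ℝ} (h : t ≤ -θ) : cl θ t = -θ := by
  unfold cl
  rw [max_eq_right (min_le_of_left_le h)]

lemma cl_neg {θ : ℝ} (hθ : 0 ≤ θ) (t : ℝ) : cl θ (-t) = - cl θ t := by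
  rcases le_total θ t with h | h
  · rw [cl_eq_of_ge hθ h, cl_eq_of_le (by linarith)]
  rcases le_total t (-θ) with h2 | h2
  · rw [cl_eq_of_le h2, cl_eq_of_ge hθ (by linarith)]; ring
  · rw [cl_eq_self (abs_le.2 ⟨by linarith, by linarith⟩),
      cl_eq_self (abs_le.2 ⟨h2, h⟩)]




lemma continuous_cl (θ : ℝ) : Continuous (cl θ) := by
  unfold cl; fun_prop

lemma stdφ_nonneg (t : ℝ) : 0 ≤ stdφ t := by
  unfold stdφ
  positivity

lemma stdφ_even (t : ℝ) : stdφ (-t) = stdφ t := by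
  unfold stdφ; rw [neg_pow]; norm_num

lemma continuous_stdφ : Continuous stdφ := by
  unfold stdφ; fun_prop

lemma stdφ_eq (t : ℝ) : stdφ t = Real.exp (-(1/2) * t^2) * (Real.sqrt (2*Real.pi))⁻¹ := by
  unfold stdφ
  rw [div_eq_mul_inv]
  ring_nf

lemma sqrt_two_pi_pos : 0 < Real.sqrt (2*Real.pi) :=
  Real.sqrt_pos.2 (by positivity)

lemma integrable_stdφ : Integrable stdφ := by
  have := (integrable_exp_neg_mul_sq (by norm_num : (0:ℝ) < 1/2)).mul_const
    (Real.sqrt (2*Real.pi))⁻¹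
  exact this.congr (by filter_upwards with t using (stdφ_eq t).symm)

lemma integral_stdφ : ∫ t, stdφ t = 1 := by
  have h1 : ∫ (t : ℝ), Real.exp (-(1/2) * t^2) = Real.sqrt (Real.pi / (1/2)) :=
    integral_gaussian (1/2)
  have : (∫ t, stdφ t) = (∫ (t : ℝ), Real.exp (-(1/2) * t^2)) * (Real.sqrt (2*Real.pi))⁻¹ := by
    rw [← integral_mul_const]
    congr 1 with t
    exact stdφ_eq t
  rw [this, h1]
  rw [show Real.pi / (1/2) = 2 * Real.pi by ring]
  field_simp

lemma integrable_sq_stdφ : Integrable (fun t : ℝ => t^2 * stdφ t) := by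
  have h := (integrable_rpow_mul_exp_neg_mul_sq (by norm_num : (0:ℝ) < 1/2)
    (by norm_num : (-1:ℝ) < 2)).mul_const (Real.sqrt (2*Real.pi))⁻¹
  refine h.congr (Filter.Eventually.of_forall fun t => ?_)
  simp only [stdφ_eq, show (2:ℝ) = ((2:ℕ):ℝ) by norm_num, Real.rpow_natCast]
  ring

lemma integrable_abs_stdφ : Integrable (fun t : ℝ => |t| * stdφ t) := by
  have h := ((integrable_mul_exp_neg_mul_sq (by norm_num : (0:ℝ) < 1/2)).abs).mul_const
    (Real.sqrt (2*Real.pi))⁻¹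
  refine h.congr (Filter.Eventually.of_forall fun t => ?_)
  simp only [stdφ_eq, abs_mul, abs_of_nonneg (Real.exp_nonneg _)]
  ring

lemma integrable_id_stdφ : Integrable (fun t : ℝ => t * stdφ t) := by
  have h := (integrable_mul_exp_neg_mul_sq (by norm_num : (0:ℝ) < 1/2)).mul_const
    (Real.sqrt (2*Real.pi))⁻¹
  refine h.congr (Filter.Eventually.of_forall fun t => ?_)
  simp only [stdφ_eq]; ring

lemma integral_id_stdφ : ∫ t, t * stdφ t = 0 := by
  have h := integral_neg_eq_self (fun t : ℝ => t * stdφ t) volume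
  simp only [stdφ_even, neg_mul] at h
  rw [integral_neg] at h
  linarith

lemma integral_sq_stdφ : ∫ t, t^2 * stdφ t = 1 := by
  set f : ℝ → ℝ := fun t => -t * Real.exp (-(1/2) * t^2) with hf
  have hderiv : ∀ t : ℝ, HasDerivAt f ((t^2 - 1) * Real.exp (-(1/2) * t^2)) t := by
    intro t
    have h1 : HasDerivAt (fun t : ℝ => -t) (-1) t := (hasDerivAt_id t).neg
    have h2 : HasDerivAt (fun t : ℝ => Real.exp (-(1/2) * t^2))
        (Real.exp (-(1/2) * t^2) * (-(1/2) * (2*t))) t := by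
      have hp : HasDerivAt (fun t : ℝ => -(1/2) * t^2) (-(1/2) * (2*t)) t := by
        have := (hasDerivAt_pow 2 t).const_mul (-(1/2) : ℝ)
        simpa using this
      exact hp.exp
    have := h1.fun_mul h2
    exact this.congr_deriv (by ring)
  have hint_f : Integrable f := by
    have := (integrable_mul_exp_neg_mul_sq (by norm_num : (0:ℝ) < 1/2)).neg
    exact this.congr (by filter_upwards with t using by simp [hf, neg_mul])
  have hint_f' : Integrable (fun t : ℝ => (t^2 - 1) * Real.exp (-(1/2) * t^2)) := by
    have h2 := integrable_rpow_mul_exp_neg_mul_sq (by norm_num : (0:ℝ) < 1/2)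
      (by norm_num : (-1:ℝ) < 2)
    have h0 := integrable_exp_neg_mul_sq (by norm_num : (0:ℝ) < 1/2)
    have := h2.sub h0
    refine this.congr (Filter.Eventually.of_forall fun t => ?_)
    simp only [Pi.sub_apply, show (2:ℝ) = ((2:ℕ):ℝ) by norm_num, Real.rpow_natCast]
    ring
  have hzero := integral_eq_zero_of_hasDerivAt_of_integrable hderiv hint_f' hint_f
  have h2 := integrable_rpow_mul_exp_neg_mul_sq (by norm_num : (0:ℝ) < 1/2)
    (by norm_num : (-1:ℝ) < 2)
  have h2' : Integrable (fun t : ℝ => t^2 * Real.exp (-(1/2) * t^2)) := by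
    refine h2.congr (Filter.Eventually.of_forall fun t => ?_)
    simp only [show (2:ℝ) = ((2:ℕ):ℝ) by norm_num, Real.rpow_natCast]
  have h0 := integrable_exp_neg_mul_sq (by norm_num : (0:ℝ) < 1/2)
  have hsub : (∫ t : ℝ, (t^2 - 1) * Real.exp (-(1/2) * t^2))
      = (∫ t : ℝ, t^2 * Real.exp (-(1/2) * t^2)) - ∫ t : ℝ, Real.exp (-(1/2) * t^2) := by
    rw [← integral_sub h2' h0]
    congr 1 with t; ring
  have hkey : (∫ t : ℝ, t^2 * Real.exp (-(1/2) * t^2)) = ∫ t : ℝ, Real.exp (-(1/2) * t^2) := by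
    rw [hsub] at hzero; linarith
  have : (∫ t : ℝ, t^2 * stdφ t)
      = (∫ t : ℝ, t^2 * Real.exp (-(1/2) * t^2)) * (Real.sqrt (2*Real.pi))⁻¹ := by
    rw [← integral_mul_const]
    congr 1 with t
    rw [stdφ_eq]; ring
  rw [this, hkey, integral_gaussian (1/2), show Real.pi / (1/2) = 2 * Real.pi by ring]
  field_simp

end SoftThresholdAux

/-- The Gaussian risk of soft thresholding `F μ = E[(η_θ(μ+Z) - μ)²]` is nondecreasing in `|μ|`,
is bounded by `1 + θ²`, and attains that bound in the limit `|μ| → ∞`. -/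
theorem soft_threshold_risk_monotone_and_bounded (θ : ℝ) (hθ : 0 < θ)
    (F : ℝ → ℝ)
    (hF : ∀ μ, F μ = ∫ z : ℝ, (Real.sign (μ + z) * max (|μ + z| - θ) 0 - μ)^2 * stdφ z) :
    (∀ μ₁ μ₂ : ℝ, |μ₁| ≤ |μ₂| → F μ₁ ≤ F μ₂) ∧
    (∀ μ : ℝ, F μ ≤ 1 + θ^2) ∧
    Tendsto F atTop (nhds (1 + θ^2)) ∧
    Tendsto F atBot (nhds (1 + θ^2)) := by
  classical
  open SoftThresholdAux in
  have hθ0 : (0:ℝ) ≤ θ := hθ.le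
  set G : ℝ → ℝ → ℝ := fun μ z => (z - SoftThresholdAux.cl θ (μ + z))^2 * stdφ z with hG
  have hFG : ∀ μ, F μ = ∫ z, G μ z := by
    intro μ
    rw [hF]
    congr 1 with z
    rw [SoftThresholdAux.sign_mul_max_eq hθ0 (μ+z)]
    simp only [hG]; ring
  have hbnd_int : Integrable (fun z : ℝ => (|z| + θ)^2 * stdφ z) := by
    have h1 := SoftThresholdAux.integrable_sq_stdφ
    have h2 := SoftThresholdAux.integrable_abs_stdφ.const_mul (2*θ)
    have h3 := SoftThresholdAux.integrable_stdφ.const_mul (θ^2)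
    refine ((h1.add h2).add h3).congr (Filter.Eventually.of_forall fun z => ?_)
    simp only [Pi.add_apply]
    rw [add_sq, sq_abs]
    ring
  have hGle : ∀ μ z, |G μ z| ≤ (|z| + θ)^2 * stdφ z := by
    intro μ z
    have h1 : 0 ≤ G μ z := mul_nonneg (sq_nonneg _) (SoftThresholdAux.stdφ_nonneg z)
    rw [abs_of_nonneg h1]
    refine mul_le_mul_of_nonneg_right ?_ (SoftThresholdAux.stdφ_nonneg z)
    have hcl := SoftThresholdAux.abs_cl_le hθ0 (μ+z)
    have h2 : |z - SoftThresholdAux.cl θ (μ+z)| ≤ |z| + θ := by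
      have := abs_add_le z (-(SoftThresholdAux.cl θ (μ+z)))
      rw [abs_neg] at this
      rw [sub_eq_add_neg]
      linarith
    calc (z - SoftThresholdAux.cl θ (μ+z))^2 = |z - SoftThresholdAux.cl θ (μ+z)|^2 :=
        (sq_abs _).symm
      _ ≤ (|z| + θ)^2 := pow_le_pow_left₀ (abs_nonneg _) h2 2
  have hGcont : ∀ μ, Continuous (G μ) := by
    intro μ
    refine Continuous.mul ?_ SoftThresholdAux.continuous_stdφ
    exact (continuous_id.sub ((SoftThresholdAux.continuous_cl θ).comp
      (continuous_const.add continuous_id))).pow 2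
  have hGint : ∀ μ, Integrable (G μ) := fun μ =>
    hbnd_int.mono' (hGcont μ).aestronglyMeasurable
      (Filter.Eventually.of_forall fun z => by rw [Real.norm_eq_abs]; exact hGle μ z)
  -- the derivative of the integral
  have hDeriv : ∀ μ₀ : ℝ, HasDerivAt (fun μ => ∫ z, G μ z)
      (∫ z, (if |μ₀ + z| < θ then 2*μ₀ else 0) * stdφ z) μ₀ := by
    intro μ₀
    set D : ℝ → ℝ := fun z => (if |μ₀ + z| < θ then 2*μ₀ else 0) * stdφ z with hD
    have hae : ∀ᵐ z : ℝ, |μ₀ + z| ≠ θ := by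
      have hsub : {z : ℝ | ¬ |μ₀ + z| ≠ θ} ⊆ ({θ - μ₀, -θ - μ₀} : Set ℝ) := by
        intro z hz
        simp only [Set.mem_setOf_eq, not_not] at hz
        rcases (abs_eq hθ0).1 hz with h | h
        · left; linarith
        · right; simp only [Set.mem_singleton_iff]; linarith
      have hz0 : volume ({θ - μ₀, -θ - μ₀} : Set ℝ) = 0 :=
        ((Set.finite_singleton _).insert _).measure_zero _
      rw [ae_iff]
      exact measure_mono_null hsub hz0
    have h_diff : ∀ᵐ z : ℝ, HasDerivAt (fun μ => G μ z) (D z) μ₀ := by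
      filter_upwards [hae] with z hz
      rcases lt_or_gt_of_ne hz with hlt | hgt
      · -- small case: derivative 2 μ₀
        have hcont : ContinuousAt (fun μ : ℝ => |μ + z|) μ₀ :=
          (continuous_abs.comp (continuous_id.add continuous_const)).continuousAt
        have hev : (fun μ => μ^2 * stdφ z) =ᶠ[nhds μ₀] fun μ => G μ z := by
          filter_upwards [hcont.tendsto.eventually_lt_const hlt] with μ hμ
          simp only [hG]
          rw [SoftThresholdAux.cl_eq_self hμ.le]
          ring
        have hd : HasDerivAt (fun μ : ℝ => μ^2 * stdφ z) (2*μ₀ * stdφ z) μ₀ := by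
          have := (hasDerivAt_pow 2 μ₀).mul_const (stdφ z)
          simpa [mul_comm] using this
        have hDz : D z = 2*μ₀ * stdφ z := by simp only [hD, if_pos hlt]
        rw [hDz]
        exact (hd.congr_of_eventuallyEq hev.symm)
      · -- large case: derivative 0
        have hDz : D z = 0 := by simp only [hD, if_neg (not_lt.2 hgt.le), zero_mul]
        rw [hDz]
        rcases lt_abs.mp hgt with h | h
        · have hcont : ContinuousAt (fun μ : ℝ => μ + z) μ₀ :=
            (continuous_id.add continuous_const).continuousAt
          have hev : (fun _ : ℝ => (z - θ)^2 * stdφ z) =ᶠ[nhds μ₀] fun μ => G μ z := by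
            filter_upwards [hcont.tendsto.eventually_const_lt h] with μ hμ
            simp only [hG]
            rw [SoftThresholdAux.cl_eq_of_ge hθ0 hμ.le]
          exact (hasDerivAt_const μ₀ _).congr_of_eventuallyEq hev.symm
        · have hcont : ContinuousAt (fun μ : ℝ => μ + z) μ₀ :=
            (continuous_id.add continuous_const).continuousAt
          have hev : (fun _ : ℝ => (z + θ)^2 * stdφ z) =ᶠ[nhds μ₀] fun μ => G μ z := by
            have h' : μ₀ + z < -θ := by linarith
            filter_upwards [hcont.tendsto.eventually_lt_const h'] with μ hμ
            simp only [hG]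
            rw [SoftThresholdAux.cl_eq_of_le hμ.le]
            ring_nf
          exact (hasDerivAt_const μ₀ _).congr_of_eventuallyEq hev.symm
    have h_lip : ∀ᵐ z : ℝ, LipschitzOnWith (Real.nnabs ((2*|z| + 2*θ) * stdφ z))
        (fun μ => G μ z) (Metric.ball μ₀ 1) := by
      refine Filter.Eventually.of_forall fun z => LipschitzOnWith.of_dist_le_mul
        fun μ₁ _ μ₂ _ => ?_
      rw [Real.dist_eq, Real.dist_eq, Real.coe_nnabs,
        abs_of_nonneg (mul_nonneg (by positivity) (SoftThresholdAux.stdφ_nonneg z))]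
      have e : G μ₁ z - G μ₂ z = ((SoftThresholdAux.cl θ (μ₂+z) - SoftThresholdAux.cl θ (μ₁+z))
          * (2*z - SoftThresholdAux.cl θ (μ₁+z) - SoftThresholdAux.cl θ (μ₂+z))) * stdφ z := by
        simp only [hG]; ring
      rw [e, abs_mul, abs_mul, abs_of_nonneg (SoftThresholdAux.stdφ_nonneg z)]
      have h1 : |SoftThresholdAux.cl θ (μ₂+z) - SoftThresholdAux.cl θ (μ₁+z)| ≤ |μ₁ - μ₂| := by
        have h := SoftThresholdAux.cl_lip θ (μ₂+z) (μ₁+z)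
        have h' : (μ₂+z) - (μ₁+z) = μ₂ - μ₁ := by ring
        rw [h'] at h
        rw [abs_sub_comm μ₁ μ₂]
        exact h
      have h2 : |2*z - SoftThresholdAux.cl θ (μ₁+z) - SoftThresholdAux.cl θ (μ₂+z)|
          ≤ 2*|z| + 2*θ := by
        have a1 := abs_le.1 (SoftThresholdAux.abs_cl_le hθ0 (μ₁+z))
        have a2 := abs_le.1 (SoftThresholdAux.abs_cl_le hθ0 (μ₂+z))
        have b1 := le_abs_self z
        have b2 := neg_abs_le z
        rw [abs_le]
        constructor <;> [nlinarith; nlinarith]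
      calc |SoftThresholdAux.cl θ (μ₂+z) - SoftThresholdAux.cl θ (μ₁+z)|
            * |2*z - SoftThresholdAux.cl θ (μ₁+z) - SoftThresholdAux.cl θ (μ₂+z)| * stdφ z
          ≤ |μ₁ - μ₂| * (2*|z| + 2*θ) * stdφ z := by
            have := mul_le_mul h1 h2 (abs_nonneg _) (abs_nonneg _)
            exact mul_le_mul_of_nonneg_right this (SoftThresholdAux.stdφ_nonneg z)
        _ = (2*|z| + 2*θ) * stdφ z * |μ₁ - μ₂| := by ring
    have hD_meas : AEStronglyMeasurable D volume := by
      have hs : MeasurableSet {z : ℝ | |μ₀ + z| < θ} :=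
        measurableSet_lt (continuous_abs.comp (continuous_const.add continuous_id)).measurable
          measurable_const
      exact ((Measurable.ite hs measurable_const measurable_const).mul
        SoftThresholdAux.continuous_stdφ.measurable).aestronglyMeasurable
    have hbound2 : Integrable (fun z : ℝ => (2*|z| + 2*θ) * stdφ z) := by
      have := (SoftThresholdAux.integrable_abs_stdφ.const_mul 2).add
        (SoftThresholdAux.integrable_stdφ.const_mul (2*θ))
      refine this.congr (Filter.Eventually.of_forall fun z => ?_)
      simp only [Pi.add_apply]
      ring
    exact (hasDerivAt_integral_of_dominated_loc_of_lip (Metric.ball_mem_nhds μ₀ one_pos)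
      (Filter.Eventually.of_forall fun μ => (hGcont μ).aestronglyMeasurable)
      (hGint μ₀) hD_meas h_lip hbound2 h_diff).2
  set Fi : ℝ → ℝ := fun μ => ∫ z, G μ z with hFi
  have hdiff : Differentiable ℝ Fi := fun μ => (hDeriv μ).differentiableAt
  have hmono : MonotoneOn Fi (Set.Ici (0:ℝ)) := by
    refine monotoneOn_of_deriv_nonneg (convex_Ici 0) hdiff.continuous.continuousOn
      (fun x _ => (hdiff x).differentiableWithinAt) ?_
    intro x hx
    rw [interior_Ici] at hx
    rw [(hDeriv x).deriv]
    refine integral_nonneg fun z => ?_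
    refine mul_nonneg ?_ (SoftThresholdAux.stdφ_nonneg z)
    split_ifs
    · linarith [(Set.mem_Ioi.mp hx).le]
    · exact le_refl 0
  have heven : ∀ μ, Fi (-μ) = Fi μ := by
    intro μ
    calc Fi (-μ) = ∫ z, G (-μ) (-z) := (integral_neg_eq_self (fun z => G (-μ) z) volume).symm
      _ = ∫ z, G μ z := by
          congr 1 with z
          simp only [hG]
          rw [show -μ + -z = -(μ + z) by ring, SoftThresholdAux.cl_neg hθ0,
            SoftThresholdAux.stdφ_even]
          ring
  have hlim : (∫ z : ℝ, (z - θ)^2 * stdφ z) = 1 + θ^2 := by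
    have i1 := SoftThresholdAux.integrable_sq_stdφ
    have i2 := SoftThresholdAux.integrable_id_stdφ.const_mul (-(2*θ))
    have i3 := SoftThresholdAux.integrable_stdφ.const_mul (θ^2)
    have e : (fun z : ℝ => (z - θ)^2 * stdφ z)
        = fun z => z^2 * stdφ z + (-(2*θ)) * (z * stdφ z) + (θ^2) * stdφ z := by
      funext z; ring
    have i12 : Integrable (fun z : ℝ => z ^ 2 * stdφ z + -(2 * θ) * (z * stdφ z)) volume :=
      i1.add i2
    rw [e, integral_add i12 i3, integral_add i1 i2, integral_const_mul,
      integral_const_mul, SoftThresholdAux.integral_sq_stdφ,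
      SoftThresholdAux.integral_id_stdφ, SoftThresholdAux.integral_stdφ]
    ring
  have hTop : Tendsto Fi atTop (nhds (1 + θ^2)) := by
    rw [← hlim]
    refine tendsto_integral_filter_of_dominated_convergence (fun z => (|z| + θ)^2 * stdφ z)
      (Filter.Eventually.of_forall fun μ => (hGcont μ).aestronglyMeasurable)
      (Filter.Eventually.of_forall fun μ => Filter.Eventually.of_forall fun z => by
        rw [Real.norm_eq_abs]; exact hGle μ z)
      hbnd_int
      (Filter.Eventually.of_forall fun z => ?_)
    refine Tendsto.congr' ?_ tendsto_const_nhds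
    filter_upwards [eventually_ge_atTop (θ - z)] with μ hμ
    simp only [hG]
    rw [SoftThresholdAux.cl_eq_of_ge hθ0 (by linarith : θ ≤ μ + z)]
  have hBot : Tendsto Fi atBot (nhds (1 + θ^2)) := by
    have := hTop.comp tendsto_neg_atBot_atTop
    exact this.congr fun μ => heven μ
  have hFabs : ∀ μ, F μ = Fi |μ| := by
    intro μ
    rcases abs_choice μ with h | h
    · rw [h]; exact hFG μ
    · rw [h, heven]; exact hFG μ
  refine ⟨?_, ?_, ?_, ?_⟩
  · intro μ₁ μ₂ h12
    rw [hFabs μ₁, hFabs μ₂]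
    exact hmono (abs_nonneg μ₁) ((abs_nonneg μ₁).trans h12) h12
  · intro μ
    rw [hFabs μ]
    refine ge_of_tendsto hTop ?_
    filter_upwards [eventually_ge_atTop |μ|] with t ht
    exact hmono (abs_nonneg μ) ((abs_nonneg μ).trans ht) ht
  · exact hTop.congr fun μ => (hFG μ).symm
  · exact hBot.congr fun μ => (hFG μ).symm
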